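/- For all α, β ∈ ℂ, the algebra 𝔠₂₆(α, β) on ℂ⁵ with nonzero basis products e₁e₁ = α e₅, e₁e₂ = e₃, e₂e₂ = β e₅, e₁e₃ = e₄ + e₅, e₂e₃ = e₄, e₃e₃ = e₅ is a nilpotent commutative algebra (A⁶ = 0) that satisfies the almost-Jordan identity 2·(((y·x)·x)·x) + y·((x·x)·x) = 3·((y·(x·x))·x) for all x, y, but does not satisfy the Jordan identity: there exist x, y with ((x·x)·y)·x ≠ (x·x)·(y·x). -/
import Mathlib


/-- `IsProdOf μ n z` says that `z` is a product of `n` elements under the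
multiplication `μ`, with some arrangement of parentheses. -/
inductive IsProdOf {V : Type*} (μ : V → V → V) : ℕ → V → Prop
  | base (x : V) : IsProdOf μ 1 x
  | mul {m n : ℕ} {a b : V} :
      IsProdOf μ m a → IsProdOf μ n b → IsProdOf μ (m + n) (μ a b)

/-- Structure constants of the algebra 𝔠₂₆(α, β) (e₁e₁ = α e₅, e₁e₂ = e₃, e₂e₂ = β e₅, e₁e₃ = e₄ + e₅, e₂e₃ = e₄, e₃e₃ = e₅) on ℂ⁵ (basis `e₁, …, e₅` indexed by `Fin 5`),
extended symmetrically; unlisted products of basis vectors are zero. -/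
noncomputable def tbl26 (α β : ℂ) : Fin 5 → Fin 5 → Fin 5 → ℂ :=
  ![![![0,0,0,0,α], ![0,0,1,0,0], ![0,0,0,1,1], 0, 0],
    ![![0,0,1,0,0], ![0,0,0,0,β], ![0,0,0,1,0], 0, 0],
    ![![0,0,0,1,1], ![0,0,0,1,0], ![0,0,0,0,1], 0, 0],
    0,
    0]

/-- The bilinear multiplication of the algebra on ℂ⁵. -/
noncomputable def mul26 (α β : ℂ) (x y : Fin 5 → ℂ) : Fin 5 → ℂ :=
  fun k => ∑ i, ∑ j, x i * y j * tbl26 α β i j k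

lemma mul26_eq (α β : ℂ) (x y : Fin 5 → ℂ) :
    mul26 α β x y = ![0, 0, x 0 * y 1 + x 1 * y 0,
      x 0 * y 2 + x 2 * y 0 + x 1 * y 2 + x 2 * y 1,
      α * (x 0 * y 0) + x 0 * y 2 + x 2 * y 0 + β * (x 1 * y 1) + x 2 * y 2] := by
  funext k
  fin_cases k <;>
    simp [mul26, tbl26, Fin.sum_univ_five, Matrix.vecHead, Matrix.vecTail] <;> ring

lemma isProdOf_pos {V : Type*} {μ : V → V → V} {n : ℕ} {z : V}
    (h : IsProdOf μ n z) : 1 ≤ n := by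
  induction h with
  | base x => exact le_refl 1
  | mul ha hb iha ihb => omega

lemma key26 (α β : ℂ) {n : ℕ} {z : Fin 5 → ℂ} (h : IsProdOf (mul26 α β) n z) :
    (2 ≤ n → z 0 = 0 ∧ z 1 = 0) ∧ (3 ≤ n → z 2 = 0) ∧ (4 ≤ n → z 3 = 0) ∧
    (5 ≤ n → z 4 = 0) := by
  induction h with
  | base x => refine ⟨fun h => ?_, fun h => ?_, fun h => ?_, fun h => ?_⟩ <;> omega
  | @mul m n a b ha hb iha ihb =>
    have hm := isProdOf_pos ha
    have hn := isProdOf_pos hb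
    obtain ⟨A2, A3, A4, A5⟩ := iha
    obtain ⟨B2, B3, B4, B5⟩ := ihb
    refine ⟨fun _ => ⟨by simp [mul26_eq], by simp [mul26_eq]⟩, fun h => ?_,
      fun h => ?_, fun h => ?_⟩
    · rcases (show 2 ≤ m ∨ 2 ≤ n by omega) with h' | h'
      · obtain ⟨h0, h1⟩ := A2 h'
        simp [mul26_eq, h0, h1]
      · obtain ⟨h0, h1⟩ := B2 h'
        simp [mul26_eq, h0, h1]
    · rcases (show 3 ≤ m ∨ 3 ≤ n ∨ (2 ≤ m ∧ 2 ≤ n) by omega) with h' | h' | ⟨h1, h2⟩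
      · obtain ⟨h0, h1⟩ := A2 (by omega)
        have h2 := A3 h'
        simp [mul26_eq, h0, h1, h2]
      · obtain ⟨h0, h1⟩ := B2 (by omega)
        have h2 := B3 h'
        simp [mul26_eq, h0, h1, h2]
      · obtain ⟨ha0, ha1⟩ := A2 h1
        obtain ⟨hb0, hb1⟩ := B2 h2
        simp [mul26_eq, ha0, ha1, hb0, hb1]
    · rcases (show 4 ≤ m ∨ 4 ≤ n ∨ (2 ≤ m ∧ 3 ≤ n) ∨ (3 ≤ m ∧ 2 ≤ n) by omega)
        with h' | h' | ⟨h1, h2⟩ | ⟨h1, h2⟩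
      · obtain ⟨h0, h1⟩ := A2 (by omega)
        have h2 := A3 (by omega)
        simp [mul26_eq, h0, h1, h2]
      · obtain ⟨h0, h1⟩ := B2 (by omega)
        have h2 := B3 (by omega)
        simp [mul26_eq, h0, h1, h2]
      · obtain ⟨ha0, ha1⟩ := A2 h1
        obtain ⟨hb0, hb1⟩ := B2 (by omega)
        have hb2 := B3 h2
        simp [mul26_eq, ha0, ha1, hb0, hb1, hb2]
      · obtain ⟨ha0, ha1⟩ := A2 (by omega)
        have ha2 := A3 h1
        obtain ⟨hb0, hb1⟩ := B2 h2
        simp [mul26_eq, ha0, ha1, ha2, hb0, hb1]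

/-- The algebra is nilpotent (A⁶ = 0), commutative, satisfies the almost-Jordan identity, but does not satisfy the Jordan identity. -/
theorem c26_properties (α β : ℂ) :
    (∀ x y : Fin 5 → ℂ, mul26 α β x y = mul26 α β y x) ∧
    (∀ z : Fin 5 → ℂ, IsProdOf (mul26 α β) 6 z → z = 0) ∧
    (∀ x y : Fin 5 → ℂ,
        (2 : ℂ) • mul26 α β (mul26 α β (mul26 α β y x) x) x + mul26 α β y (mul26 α β (mul26 α β x x) x) =
          (3 : ℂ) • mul26 α β (mul26 α β y (mul26 α β x x)) x) ∧
    (∃ x y : Fin 5 → ℂ,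
        mul26 α β (mul26 α β (mul26 α β x x) y) x ≠ mul26 α β (mul26 α β x x) (mul26 α β y x)) := by
  refine ⟨?_, ?_, ?_, ?_⟩
  · intro x y
    funext k
    fin_cases k <;> simp [mul26_eq] <;> ring
  · intro z h
    obtain ⟨h01, h2, h3, h4⟩ := key26 α β h
    obtain ⟨h0, h1⟩ := h01 (by norm_num)
    funext k
    fin_cases k
    · exact h0
    · exact h1
    · exact h2 (by norm_num)
    · exact h3 (by norm_num)
    · exact h4 (by norm_num)
  · intro x y
    funext k
    fin_cases k <;> simp [mul26_eq] <;> ring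
  · refine ⟨![1, 1, 0, 0, 0], ![1, 0, 0, 0, 0], fun heq => ?_⟩
    have := congrFun heq 4
    simp [mul26_eq] at this
    exact absurd this (by norm_num)
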